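/- arXiv:2212.14577 — 2 statements merged into one kernel-verified Lean document; each statement's English description precedes it below -/
import Mathlib

section
/- Let (t_k) be a sequence of positive reals with t_k → 0, for each k let (x^k,y^k) be a Karush–Kuhn–Tucker point of the Scholtes-type regularization S(t_k), and suppose (x^k,y^k) → (x̄,ȳ) where (x̄,ȳ) is a nondegenerate T-stationary point of the regularized continuous reformulation R. Then for all sufficiently large k the biactive set is absorbed by the active relaxed orthogonality constraints: a00(x̄,ȳ) ⊆ H(x^k,y^k). -/
open scoped Classical
open Finset Filter Topology

noncomputable section
namespace Scholtes

/-- Vectors in ℝⁿ. -/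
abbrev Vec (n : ℕ) := Fin n → ℝ

variable {n : ℕ} {P Q : Type*} [Fintype P] [Fintype Q]

/-- Euclidean dot product. -/
def dot (u v : Vec n) : ℝ := ∑ i, u i * v i

/-- Gradient: vector of partial derivatives. -/
def grad (f : Vec n → ℝ) (x : Vec n) : Vec n := fun i => fderiv ℝ f x (Pi.single i 1)

/-- Hessian bilinear form of `L` at `z`, evaluated at directions `ξ`, `ζ`. -/
def hess (L : Vec n × Vec n → ℝ) (z ξ ζ : Vec n × Vec n) : ℝ :=
  fderiv ℝ (fun w => fderiv ℝ L w ξ) z ζ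

/-- The pair vector (e_i, 0) ∈ ℝ²ⁿ. -/
def ex (i : Fin n) : Vec n × Vec n := (Pi.single i 1, 0)

/-- The pair vector (0, e_i) ∈ ℝ²ⁿ. -/
def ey (i : Fin n) : Vec n × Vec n := (0, Pi.single i 1)

/-- The pair vector (0, e) ∈ ℝ²ⁿ, where e is the all-ones vector. -/
def eAll : Vec n × Vec n := (0, fun _ => 1)

/-- The pair vector (y_i e_i, x_i e_i) ∈ ℝ²ⁿ. -/
def hvec (x y : Vec n) (i : Fin n) : Vec n × Vec n := (Pi.single i (y i), Pi.single i (x i))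

/-- The number of negative eigenvalues of the bilinear form `B` restricted to the
(sub)space `T`, expressed as the maximal dimension of a linear subspace of `T` on
which the associated quadratic form is negative definite. -/
def negIndex (B : (Vec n × Vec n) → (Vec n × Vec n) → ℝ) (T : (Vec n × Vec n) → Prop) : ℕ :=
  sSup {d : ℕ | ∃ W : Submodule ℝ (Vec n × Vec n),
    (∀ ξ ∈ W, T ξ) ∧ Module.finrank ℝ W = d ∧ ∀ ξ ∈ W, ξ ≠ 0 → B ξ ξ < 0}

/-- The data and standing assumptions of the paper: objective `f`, equality
constraints `h`, inequality constraints `g`, positive pairwise different linear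
coefficients `c`, cardinality bound `s` and regularization parameter `ε`. -/
structure Setting (n : ℕ) (P Q : Type*) [Fintype P] [Fintype Q] where
  f : Vec n → ℝ
  h : P → Vec n → ℝ
  g : Q → Vec n → ℝ
  c : Vec n
  s : ℕ
  ε : ℝ
  hn : 1 ≤ n
  hf : ContDiff ℝ 2 f
  hh : ∀ p, ContDiff ℝ 2 (h p)
  hg : ∀ q, ContDiff ℝ 2 (g q)
  hcpos : ∀ i, 0 < c i
  hcinj : Function.Injective c
  hs : s < n
  hεpos : 0 < ε
  hεle : ε ≤ 1 / ((n : ℝ) - s)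

/-- Index set a01: x̄_i = 0, ȳ_i > 0. -/
def a01 (x y : Vec n) : Finset (Fin n) := univ.filter fun i => x i = 0 ∧ 0 < y i

/-- Index set a10: x̄_i ≠ 0, ȳ_i = 0. -/
def a10 (x y : Vec n) : Finset (Fin n) := univ.filter fun i => x i ≠ 0 ∧ y i = 0

/-- Index set a00: x̄_i = 0, ȳ_i = 0. -/
def a00 (x y : Vec n) : Finset (Fin n) := univ.filter fun i => x i = 0 ∧ y i = 0

/-- Index set N(y): y_i = 0. -/
def Nact (y : Vec n) : Finset (Fin n) := univ.filter fun i => y i = 0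

/-- Index set H≥(x,y): x_i y_i = −t. -/
def Hge (t : ℝ) (x y : Vec n) : Finset (Fin n) := univ.filter fun i => x i * y i = -t

/-- Index set H≤(x,y): x_i y_i = t. -/
def Hle (t : ℝ) (x y : Vec n) : Finset (Fin n) := univ.filter fun i => x i * y i = t

/-- Index set H(x,y) = H≥ ∪ H≤. -/
def Hact (t : ℝ) (x y : Vec n) : Finset (Fin n) := Hge t x y ∪ Hle t x y

/-- Active inequality constraints Q0(x). -/
def Q0 (D : Setting n P Q) (x : Vec n) : Finset Q := univ.filter fun q => D.g q x = 0

/-- Active upper bounds E(y): y_i = 1 + ε. -/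
def Eact (D : Setting n P Q) (y : Vec n) : Finset (Fin n) := univ.filter fun i => y i = 1 + D.ε

/-- Index set O(x,y) = complement of E(y) ∪ N(y) ∪ H(x,y). -/
def Oact (D : Setting n P Q) (t : ℝ) (x y : Vec n) : Finset (Fin n) :=
  (Eact D y ∪ Nact y ∪ Hact t x y)ᶜ

/-- Feasibility for the regularized continuous reformulation R. -/
def feasR (D : Setting n P Q) (x y : Vec n) : Prop :=
  (∀ p, D.h p x = 0) ∧ (∀ q, 0 ≤ D.g q x) ∧ ((n : ℝ) - D.s ≤ ∑ i, y i) ∧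
  (∀ i, x i * y i = 0) ∧ (∀ i, 0 ≤ y i ∧ y i ≤ 1 + D.ε)

/-- Feasibility for the Scholtes-type regularization S(t). -/
def feasS (D : Setting n P Q) (t : ℝ) (x y : Vec n) : Prop :=
  (∀ p, D.h p x = 0) ∧ (∀ q, 0 ≤ D.g q x) ∧ ((n : ℝ) - D.s ≤ ∑ i, y i) ∧
  (∀ i, -t ≤ x i * y i ∧ x i * y i ≤ t) ∧ (∀ i, 0 ≤ y i ∧ y i ≤ 1 + D.ε)

/-- Multipliers for T-stationarity (defined on the whole index ranges). -/
structure TMult (n : ℕ) (P Q : Type*) where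
  lam : P → ℝ
  mu1 : Q → ℝ
  mu2 : Fin n → ℝ
  mu3 : ℝ
  sig1 : Fin n → ℝ
  sig2 : Fin n → ℝ
  rho1 : Fin n → ℝ
  rho2 : Fin n → ℝ

/-- The T-stationarity equation (1) of Definition 2. -/
def TStatEq (D : Setting n P Q) (x y : Vec n) (M : TMult n P Q) : Prop :=
  ((grad D.f x, D.c) : Vec n × Vec n) =
    (∑ p, M.lam p • ((grad (D.h p) x, (0 : Vec n)) : Vec n × Vec n))
    + (∑ q ∈ Q0 D x, M.mu1 q • ((grad (D.g q) x, (0 : Vec n)) : Vec n × Vec n))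
    - (∑ i ∈ Eact D y, M.mu2 i • ey i)
    + M.mu3 • eAll
    + (∑ i ∈ a01 x y, M.sig1 i • ex i)
    + (∑ i ∈ a10 x y, M.sig2 i • ey i)
    + (∑ i ∈ a00 x y, (M.rho1 i • ex i + M.rho2 i • ey i))

/-- (x,y) is a T-stationary point of R with multipliers M. -/
def TStatAt (D : Setting n P Q) (x y : Vec n) (M : TMult n P Q) : Prop :=
  feasR D x y ∧
  (∀ q ∈ Q0 D x, 0 ≤ M.mu1 q) ∧
  (∀ i ∈ Eact D y, 0 ≤ M.mu2 i) ∧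
  0 ≤ M.mu3 ∧
  M.mu3 * ((∑ i, y i) - ((n : ℝ) - D.s)) = 0 ∧
  (∀ i ∈ a00 x y, M.rho1 i = 0 ∨ M.rho2 i ≤ 0) ∧
  TStatEq D x y M

/-- (x,y) is a T-stationary point of R. -/
def TStat (D : Setting n P Q) (x y : Vec n) : Prop := ∃ M, TStatAt D x y M

/-- MPOC-tailored LICQ at a feasible point (x,y) of R: the indicated family of
vectors in ℝ²ⁿ is linearly independent. -/
def MPOC_LICQ (D : Setting n P Q) (x y : Vec n) : Prop :=
  ∀ (lam : P → ℝ) (mu1 : Q → ℝ) (mu2 : Fin n → ℝ) (mu3 : ℝ) (s1 s2 : Fin n → ℝ),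
    ((∑ i, y i) ≠ (n : ℝ) - D.s → mu3 = 0) →
    (∑ p, lam p • ((grad (D.h p) x, (0 : Vec n)) : Vec n × Vec n))
    + (∑ q ∈ Q0 D x, mu1 q • ((grad (D.g q) x, (0 : Vec n)) : Vec n × Vec n))
    + (∑ i ∈ Eact D y, mu2 i • ey i)
    + mu3 • eAll
    + (∑ i ∈ a01 x y ∪ a00 x y, s1 i • ex i)
    + (∑ i ∈ a10 x y ∪ a00 x y, s2 i • ey i) = 0 →
    (∀ p, lam p = 0) ∧ (∀ q ∈ Q0 D x, mu1 q = 0) ∧ (∀ i ∈ Eact D y, mu2 i = 0) ∧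
    mu3 = 0 ∧ (∀ i ∈ a01 x y ∪ a00 x y, s1 i = 0) ∧ (∀ i ∈ a10 x y ∪ a00 x y, s2 i = 0)

/-- The Lagrange function L^R associated with the T-stationary point (x̄,ȳ)
and multipliers M. -/
def LagR (D : Setting n P Q) (xb yb : Vec n) (M : TMult n P Q) (z : Vec n × Vec n) : ℝ :=
  D.f z.1 + dot D.c z.2
    - (∑ p, M.lam p * D.h p z.1)
    - (∑ q ∈ Q0 D xb, M.mu1 q * D.g q z.1)
    + (∑ i ∈ Eact D yb, M.mu2 i * (z.2 i - (1 + D.ε)))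
    - M.mu3 * ((∑ i, z.2 i) - ((n : ℝ) - D.s))
    - (∑ i ∈ a01 xb yb, M.sig1 i * z.1 i)
    - (∑ i ∈ a10 xb yb, M.sig2 i * z.2 i)
    - (∑ i ∈ a00 xb yb, (M.rho1 i * z.1 i + M.rho2 i * z.2 i))

/-- Membership in the tangent space T^R at (x̄,ȳ). -/
def inTR (D : Setting n P Q) (x y : Vec n) (ξ : Vec n × Vec n) : Prop :=
  (∀ p, dot (grad (D.h p) x) ξ.1 = 0) ∧
  (∀ q ∈ Q0 D x, dot (grad (D.g q) x) ξ.1 = 0) ∧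
  (∀ i ∈ Eact D y, ξ.2 i = 0) ∧
  ((∑ i, y i) = (n : ℝ) - D.s → (∑ i, ξ.2 i) = 0) ∧
  (∀ i ∈ a00 x y ∪ a01 x y, ξ.1 i = 0) ∧
  (∀ i ∈ a00 x y ∪ a10 x y, ξ.2 i = 0)

/-- Nondegenerate T-stationary point with multipliers M (NDT1–NDT4). -/
def NondegTStatAt (D : Setting n P Q) (x y : Vec n) (M : TMult n P Q) : Prop :=
  TStatAt D x y M ∧
  MPOC_LICQ D x y ∧
  (∀ q ∈ Q0 D x, 0 < M.mu1 q) ∧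
  (∀ i ∈ Eact D y, 0 < M.mu2 i) ∧
  ((∑ i, y i) = (n : ℝ) - D.s → 0 < M.mu3) ∧
  (∀ i ∈ a00 x y, M.rho1 i ≠ 0 ∧ M.rho2 i < 0) ∧
  (∀ ξ, inTR D x y ξ → (∀ ζ, inTR D x y ζ → hess (LagR D x y M) (x, y) ξ ζ = 0) → ξ = 0)

/-- T-index: quadratic index (number of negative eigenvalues of the restricted
Hessian of L^R) plus the biactive index |a00|. -/
def TIndex (D : Setting n P Q) (x y : Vec n) (M : TMult n P Q) : ℕ :=
  negIndex (hess (LagR D x y M) (x, y)) (inTR D x y) + (a00 x y).card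

/-- Multipliers for KKT points of S(t) (defined on the whole index ranges). -/
structure SMult (n : ℕ) (P Q : Type*) where
  lam : P → ℝ
  mu1 : Q → ℝ
  mu2 : Fin n → ℝ
  mu3 : ℝ
  etaGe : Fin n → ℝ
  etaLe : Fin n → ℝ
  nu : Fin n → ℝ

/-- The KKT equation for S(t). -/
def KKTEq (D : Setting n P Q) (t : ℝ) (x y : Vec n) (M : SMult n P Q) : Prop :=
  ((grad D.f x, D.c) : Vec n × Vec n) =
    (∑ p, M.lam p • ((grad (D.h p) x, (0 : Vec n)) : Vec n × Vec n))
    + (∑ q ∈ Q0 D x, M.mu1 q • ((grad (D.g q) x, (0 : Vec n)) : Vec n × Vec n))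
    - (∑ i ∈ Eact D y, M.mu2 i • ey i)
    + M.mu3 • eAll
    + (∑ i ∈ Hge t x y, M.etaGe i • hvec x y i)
    - (∑ i ∈ Hle t x y, M.etaLe i • hvec x y i)
    + (∑ i ∈ Nact y, M.nu i • ey i)

/-- (x,y) is a KKT point of S(t) with multipliers M. -/
def KKTAt (D : Setting n P Q) (t : ℝ) (x y : Vec n) (M : SMult n P Q) : Prop :=
  feasS D t x y ∧
  (∀ q ∈ Q0 D x, 0 ≤ M.mu1 q) ∧
  (∀ i ∈ Eact D y, 0 ≤ M.mu2 i) ∧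
  0 ≤ M.mu3 ∧
  M.mu3 * ((∑ i, y i) - ((n : ℝ) - D.s)) = 0 ∧
  (∀ i ∈ Hge t x y, 0 ≤ M.etaGe i) ∧
  (∀ i ∈ Hle t x y, 0 ≤ M.etaLe i) ∧
  (∀ i ∈ Nact y, 0 ≤ M.nu i) ∧
  KKTEq D t x y M

/-- (x,y) is a KKT point of S(t). -/
def KKT (D : Setting n P Q) (t : ℝ) (x y : Vec n) : Prop := ∃ M, KKTAt D t x y M

/-- LICQ at a feasible point (x,y) of S(t). -/
def LICQ (D : Setting n P Q) (t : ℝ) (x y : Vec n) : Prop :=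
  ∀ (lam : P → ℝ) (mu1 : Q → ℝ) (mu2 : Fin n → ℝ) (mu3 : ℝ) (eta nu : Fin n → ℝ),
    ((∑ i, y i) ≠ (n : ℝ) - D.s → mu3 = 0) →
    (∑ p, lam p • ((grad (D.h p) x, (0 : Vec n)) : Vec n × Vec n))
    + (∑ q ∈ Q0 D x, mu1 q • ((grad (D.g q) x, (0 : Vec n)) : Vec n × Vec n))
    + (∑ i ∈ Eact D y, mu2 i • ey i)
    + mu3 • eAll
    + (∑ i ∈ Hact t x y, eta i • hvec x y i)
    + (∑ i ∈ Nact y, nu i • ey i) = 0 →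
    (∀ p, lam p = 0) ∧ (∀ q ∈ Q0 D x, mu1 q = 0) ∧ (∀ i ∈ Eact D y, mu2 i = 0) ∧
    mu3 = 0 ∧ (∀ i ∈ Hact t x y, eta i = 0) ∧ (∀ i ∈ Nact y, nu i = 0)

/-- The Lagrange function L^S associated with the KKT point (x̄,ȳ) of S(t)
and multipliers M. -/
def LagS (D : Setting n P Q) (t : ℝ) (xb yb : Vec n) (M : SMult n P Q)
    (z : Vec n × Vec n) : ℝ :=
  D.f z.1 + dot D.c z.2
    - (∑ p, M.lam p * D.h p z.1)
    - (∑ q ∈ Q0 D xb, M.mu1 q * D.g q z.1)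
    + (∑ i ∈ Eact D yb, M.mu2 i * (z.2 i - (1 + D.ε)))
    - M.mu3 * ((∑ i, z.2 i) - ((n : ℝ) - D.s))
    - (∑ i ∈ Hge t xb yb, M.etaGe i * (z.1 i * z.2 i + t))
    + (∑ i ∈ Hle t xb yb, M.etaLe i * (z.1 i * z.2 i - t))
    - (∑ i ∈ Nact yb, M.nu i * z.2 i)

/-- Membership in the tangent space T^S at (x,y) for S(t). -/
def inTS (D : Setting n P Q) (t : ℝ) (x y : Vec n) (ξ : Vec n × Vec n) : Prop :=
  (∀ p, dot (grad (D.h p) x) ξ.1 = 0) ∧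
  (∀ q ∈ Q0 D x, dot (grad (D.g q) x) ξ.1 = 0) ∧
  (∀ i ∈ Eact D y, ξ.2 i = 0) ∧
  ((∑ i, y i) = (n : ℝ) - D.s → (∑ i, ξ.2 i) = 0) ∧
  (∀ i ∈ Hact t x y, y i * ξ.1 i + x i * ξ.2 i = 0) ∧
  (∀ i ∈ Nact y, ξ.2 i = 0)

/-- Nondegenerate KKT point of S(t) with multipliers M (ND1–ND3). -/
def NondegKKTAt (D : Setting n P Q) (t : ℝ) (x y : Vec n) (M : SMult n P Q) : Prop :=
  KKTAt D t x y M ∧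
  LICQ D t x y ∧
  (∀ q ∈ Q0 D x, 0 < M.mu1 q) ∧
  (∀ i ∈ Eact D y, 0 < M.mu2 i) ∧
  (∀ i ∈ Hge t x y, 0 < M.etaGe i) ∧
  (∀ i ∈ Hle t x y, 0 < M.etaLe i) ∧
  (∀ i ∈ Nact y, 0 < M.nu i) ∧
  ((∑ i, y i) = (n : ℝ) - D.s → 0 < M.mu3) ∧
  (∀ ξ, inTS D t x y ξ → (∀ ζ, inTS D t x y ζ → hess (LagS D t x y M) (x, y) ξ ζ = 0) → ξ = 0)

/-- Quadratic index of a KKT point of S(t): number of negative eigenvalues of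
the restricted Hessian of L^S. -/
def QIdx (D : Setting n P Q) (t : ℝ) (x y : Vec n) (M : SMult n P Q) : ℕ :=
  negIndex (hess (LagS D t x y M) (x, y)) (inTS D t x y)

lemma grad_cont {f : Vec n → ℝ} (hf : ContDiff ℝ 2 f) : Continuous (grad f) := by
  have h : Continuous (fderiv ℝ f) := hf.continuous_fderiv (by norm_num)
  exact continuous_pi fun i => h.clm_apply continuous_const

lemma hvec_decomp (x y : Vec n) (i : Fin n) : hvec x y i = y i • ex i + x i • ey i := by
  simp only [hvec, ex, ey, Prod.smul_mk, Prod.mk_add_mk, smul_zero, add_zero, zero_add]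
  rw [← Pi.single_smul, ← Pi.single_smul]
  simp [smul_eq_mul]

/-- Combination of the limit-shaped family with given coefficients. -/
def combo (D : Setting n P Q) (xb yb x : Vec n) (lam : P → ℝ) (mu1 : Q → ℝ)
    (mu2 : Vec n) (mu3 : ℝ) (s1 s2 : Vec n) : Vec n × Vec n :=
  (∑ p, lam p • ((grad (D.h p) x, (0 : Vec n)) : Vec n × Vec n))
  + (∑ q ∈ Q0 D xb, mu1 q • ((grad (D.g q) x, (0 : Vec n)) : Vec n × Vec n))
  - (∑ i ∈ Eact D yb, mu2 i • ey i)
  + mu3 • eAll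
  + (∑ i, s1 i • ex i)
  + (∑ i, s2 i • ey i)

lemma combo_smul (D : Setting n P Q) (xb yb x : Vec n) (lam : P → ℝ) (mu1 : Q → ℝ)
    (mu2 : Vec n) (mu3 : ℝ) (s1 s2 : Vec n) (r : ℝ) :
    combo D xb yb x (r • lam) (r • mu1) (r • mu2) (r * mu3) (r • s1) (r • s2)
      = r • combo D xb yb x lam mu1 mu2 mu3 s1 s2 := by
  simp only [combo, Pi.smul_apply, smul_eq_mul, mul_smul, ← Finset.smul_sum,
    smul_sub, smul_add]

lemma combo_sub (D : Setting n P Q) (xb yb x : Vec n) (lam lam' : P → ℝ) (mu1 mu1' : Q → ℝ)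
    (mu2 mu2' : Vec n) (mu3 mu3' : ℝ) (s1 s1' s2 s2' : Vec n) :
    combo D xb yb x (lam - lam') (mu1 - mu1') (mu2 - mu2') (mu3 - mu3') (s1 - s1') (s2 - s2')
      = combo D xb yb x lam mu1 mu2 mu3 s1 s2 - combo D xb yb x lam' mu1' mu2' mu3' s1' s2' := by
  simp only [combo, Pi.sub_apply, sub_smul, Finset.sum_sub_distrib]
  abel

lemma reshape_KKT (D : Setting n P Q) {t : ℝ} {x y : Vec n} {M : SMult n P Q}
    (hEq : KKTEq D t x y M) (xb yb : Vec n)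
    (hQ : Q0 D x ⊆ Q0 D xb) (hE : Eact D y ⊆ Eact D yb) :
    combo D xb yb x M.lam
      (fun q => if q ∈ Q0 D x then M.mu1 q else 0)
      (fun i => if i ∈ Eact D y then M.mu2 i else 0)
      M.mu3
      (fun i => (if i ∈ Hge t x y then M.etaGe i * y i else 0)
              - (if i ∈ Hle t x y then M.etaLe i * y i else 0))
      (fun i => ((if i ∈ Hge t x y then M.etaGe i * x i else 0)
              - (if i ∈ Hle t x y then M.etaLe i * x i else 0))
              + (if i ∈ Nact y then M.nu i else 0))
    = (grad D.f x, D.c) := by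
  have e1 : ∑ q ∈ Q0 D xb, (if q ∈ Q0 D x then M.mu1 q else 0)
        • ((grad (D.g q) x, (0 : Vec n)) : Vec n × Vec n)
      = ∑ q ∈ Q0 D x, M.mu1 q • ((grad (D.g q) x, (0 : Vec n)) : Vec n × Vec n) := by
    simp only [ite_smul, zero_smul]
    rw [Finset.sum_ite_mem, Finset.inter_eq_right.mpr hQ]
  have e2 : ∑ i ∈ Eact D yb, (if i ∈ Eact D y then M.mu2 i else 0) • ey (n := n) i
      = ∑ i ∈ Eact D y, M.mu2 i • ey i := by
    simp only [ite_smul, zero_smul]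
    rw [Finset.sum_ite_mem, Finset.inter_eq_right.mpr hE]
  have eG : ∀ (S : Finset (Fin n)) (η : Fin n → ℝ),
      (∑ i ∈ S, η i • hvec x y i)
        = (∑ i ∈ S, (η i * y i) • ex i) + ∑ i ∈ S, (η i * x i) • ey i := by
    intro S η
    rw [← Finset.sum_add_distrib]
    refine Finset.sum_congr rfl fun i _ => ?_
    rw [hvec_decomp, smul_add, smul_smul, smul_smul]
  have eU : ∀ (S : Finset (Fin n)) (a : Fin n → ℝ),
      (∑ i, (if i ∈ S then a i else 0) • ex (n := n) i) = ∑ i ∈ S, a i • ex i := by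
    intro S a
    simp only [ite_smul, zero_smul]
    rw [Finset.sum_ite_mem, Finset.univ_inter]
  have eU' : ∀ (S : Finset (Fin n)) (a : Fin n → ℝ),
      (∑ i, (if i ∈ S then a i else 0) • ey (n := n) i) = ∑ i ∈ S, a i • ey i := by
    intro S a
    simp only [ite_smul, zero_smul]
    rw [Finset.sum_ite_mem, Finset.univ_inter]
  have e3 : (∑ i, ((if i ∈ Hge t x y then M.etaGe i * y i else 0)
              - (if i ∈ Hle t x y then M.etaLe i * y i else 0)) • ex (n := n) i)
      = (∑ i ∈ Hge t x y, (M.etaGe i * y i) • ex i)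
        - ∑ i ∈ Hle t x y, (M.etaLe i * y i) • ex i := by
    simp only [sub_smul, Finset.sum_sub_distrib]
    rw [eU, eU]
  have e4 : (∑ i, (((if i ∈ Hge t x y then M.etaGe i * x i else 0)
              - (if i ∈ Hle t x y then M.etaLe i * x i else 0))
              + (if i ∈ Nact y then M.nu i else 0)) • ey (n := n) i)
      = ((∑ i ∈ Hge t x y, (M.etaGe i * x i) • ey i)
        - ∑ i ∈ Hle t x y, (M.etaLe i * x i) • ey i)
        + ∑ i ∈ Nact y, M.nu i • ey i := by
    simp only [add_smul, sub_smul, Finset.sum_add_distrib, Finset.sum_sub_distrib]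
    rw [eU', eU', eU']
  unfold combo
  rw [e1, e2, e3, e4, hEq, eG (Hge t x y) M.etaGe, eG (Hle t x y) M.etaLe]
  abel

lemma reshape_T (D : Setting n P Q) {x y : Vec n} {M : TMult n P Q} (hEq : TStatEq D x y M) :
    combo D x y x M.lam M.mu1 M.mu2 M.mu3
      (fun i => (if i ∈ a01 x y then M.sig1 i else 0) + (if i ∈ a00 x y then M.rho1 i else 0))
      (fun i => (if i ∈ a10 x y then M.sig2 i else 0) + (if i ∈ a00 x y then M.rho2 i else 0))
    = (grad D.f x, D.c) := by
  have eU : ∀ (S : Finset (Fin n)) (a : Fin n → ℝ),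
      (∑ i, (if i ∈ S then a i else 0) • ex (n := n) i) = ∑ i ∈ S, a i • ex i := by
    intro S a
    simp only [ite_smul, zero_smul]
    rw [Finset.sum_ite_mem, Finset.univ_inter]
  have eU' : ∀ (S : Finset (Fin n)) (a : Fin n → ℝ),
      (∑ i, (if i ∈ S then a i else 0) • ey (n := n) i) = ∑ i ∈ S, a i • ey i := by
    intro S a
    simp only [ite_smul, zero_smul]
    rw [Finset.sum_ite_mem, Finset.univ_inter]
  unfold combo
  simp only [add_smul, Finset.sum_add_distrib]
  rw [eU, eU, eU', eU', hEq, Finset.sum_add_distrib]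
  abel

lemma licq_apply (D : Setting n P Q) {xb yb : Vec n} (hL : MPOC_LICQ D xb yb)
    (lam : P → ℝ) (mu1 : Q → ℝ) (mu2 : Vec n) (mu3 : ℝ) (s1 s2 : Vec n)
    (hmu3 : (∑ i, yb i) ≠ (n : ℝ) - D.s → mu3 = 0)
    (hs1 : ∀ i, i ∉ a01 xb yb ∪ a00 xb yb → s1 i = 0)
    (hs2 : ∀ i, i ∉ a10 xb yb ∪ a00 xb yb → s2 i = 0)
    (heq : combo D xb yb xb lam mu1 mu2 mu3 s1 s2 = 0) :
    (∀ p, lam p = 0) ∧ (∀ q ∈ Q0 D xb, mu1 q = 0) ∧ (∀ i ∈ Eact D yb, mu2 i = 0) ∧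
    mu3 = 0 ∧ (∀ i, s1 i = 0) ∧ (∀ i, s2 i = 0) := by
  have h1 : ∑ i ∈ a01 xb yb ∪ a00 xb yb, s1 i • ex (n := n) i = ∑ i, s1 i • ex i :=
    Finset.sum_subset (Finset.subset_univ _) fun i _ hi => by rw [hs1 i hi, zero_smul]
  have h2 : ∑ i ∈ a10 xb yb ∪ a00 xb yb, s2 i • ey (n := n) i = ∑ i, s2 i • ey i :=
    Finset.sum_subset (Finset.subset_univ _) fun i _ hi => by rw [hs2 i hi, zero_smul]
  have h3 : ∑ i ∈ Eact D yb, (fun j => -mu2 j) i • ey (n := n) i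
      = -∑ i ∈ Eact D yb, mu2 i • ey i := by
    simp only [neg_smul, Finset.sum_neg_distrib]
  have key := hL lam mu1 (fun j => -mu2 j) mu3 s1 s2 hmu3 (by
    rw [h1, h2, h3]
    rw [← heq]
    unfold combo
    abel)
  refine ⟨key.1, key.2.1, fun i hi => ?_, key.2.2.2.1, fun i => ?_, fun i => ?_⟩
  · have := key.2.2.1 i hi
    simpa [neg_eq_zero] using this
  · by_cases h : i ∈ a01 xb yb ∪ a00 xb yb
    · exact key.2.2.2.2.1 i h
    · exact hs1 i h
  · by_cases h : i ∈ a10 xb yb ∪ a00 xb yb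
    · exact key.2.2.2.2.2 i h
    · exact hs2 i h

lemma combo_tendsto (D : Setting n P Q) (xb yb : Vec n)
    {x : ℕ → Vec n} {lam : ℕ → P → ℝ} {mu1 : ℕ → Q → ℝ} {mu2 : ℕ → Vec n} {mu3 : ℕ → ℝ}
    {s1 s2 : ℕ → Vec n} {x' : Vec n} {lam' : P → ℝ} {mu1' : Q → ℝ} {mu2' : Vec n} {mu3' : ℝ}
    {s1' s2' : Vec n}
    (hx : Tendsto x atTop (nhds x')) (hlam : Tendsto lam atTop (nhds lam'))
    (hmu1 : Tendsto mu1 atTop (nhds mu1')) (hmu2 : Tendsto mu2 atTop (nhds mu2'))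
    (hmu3 : Tendsto mu3 atTop (nhds mu3')) (hs1 : Tendsto s1 atTop (nhds s1'))
    (hs2 : Tendsto s2 atTop (nhds s2')) :
    Tendsto (fun k => combo D xb yb (x k) (lam k) (mu1 k) (mu2 k) (mu3 k) (s1 k) (s2 k))
      atTop (nhds (combo D xb yb x' lam' mu1' mu2' mu3' s1' s2')) := by
  unfold combo
  refine (((((Tendsto.add ?_ ?_).sub ?_).add ?_).add ?_).add ?_)
  · refine tendsto_finset_sum _ fun p _ => Tendsto.smul (tendsto_pi_nhds.mp hlam p) ?_
    exact (((grad_cont (D.hh p)).tendsto _).comp hx).prodMk_nhds tendsto_const_nhds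
  · refine tendsto_finset_sum _ fun q _ => Tendsto.smul (tendsto_pi_nhds.mp hmu1 q) ?_
    exact (((grad_cont (D.hg q)).tendsto _).comp hx).prodMk_nhds tendsto_const_nhds
  · exact tendsto_finset_sum _ fun i _ =>
      Tendsto.smul (tendsto_pi_nhds.mp hmu2 i) tendsto_const_nhds
  · exact Tendsto.smul hmu3 tendsto_const_nhds
  · exact tendsto_finset_sum _ fun i _ =>
      Tendsto.smul (tendsto_pi_nhds.mp hs1 i) tendsto_const_nhds
  · exact tendsto_finset_sum _ fun i _ =>
      Tendsto.smul (tendsto_pi_nhds.mp hs2 i) tendsto_const_nhds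

lemma tendsto_fst_of {α E F : Type*} [TopologicalSpace E] [TopologicalSpace F]
    {l : Filter α} {f : α → E × F} {p : E × F} (h : Tendsto f l (nhds p)) :
    Tendsto (fun a => (f a).1) l (nhds p.1) :=
  (continuous_fst.tendsto p).comp h

lemma tendsto_snd_of {α E F : Type*} [TopologicalSpace E] [TopologicalSpace F]
    {l : Filter α} {f : α → E × F} {p : E × F} (h : Tendsto f l (nhds p)) :
    Tendsto (fun a => (f a).2) l (nhds p.2) :=
  (continuous_snd.tendsto p).comp h

/-- Lemma 3c: if KKT points of S(t_k) converge to a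
nondegenerate T-stationary point of R, then eventually a00(x̄,ȳ) ⊆ H(x^k,y^k). -/
theorem statement12 {n : ℕ} {P Q : Type*} [Fintype P] [Fintype Q]
    (D : Setting n P Q) (t : ℕ → ℝ) (htpos : ∀ k, 0 < t k)
    (ht0 : Filter.Tendsto t Filter.atTop (nhds 0))
    (X Y : ℕ → Vec n) (hK : ∀ k, KKT D (t k) (X k) (Y k))
    (xb yb : Vec n)
    (hconv : Filter.Tendsto (fun k => ((X k, Y k) : Vec n × Vec n))
      Filter.atTop (nhds (xb, yb)))
    (Mb : TMult n P Q) (hnd : NondegTStatAt D xb yb Mb) :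
    ∃ K : ℕ, ∀ k ≥ K, a00 xb yb ⊆ Hact (t k) (X k) (Y k) := by
  classical
  choose M hM using hK
  by_contra hcon
  push_neg at hcon
  -- basic limits
  have hX : Tendsto X atTop (nhds xb) :=
    (continuous_fst.tendsto ((xb, yb) : Vec n × Vec n)).comp hconv
  have hY : Tendsto Y atTop (nhds yb) :=
    (continuous_snd.tendsto ((xb, yb) : Vec n × Vec n)).comp hconv
  have hXi : ∀ i, Tendsto (fun k => X k i) atTop (nhds (xb i)) := fun i => tendsto_pi_nhds.mp hX i
  have hYi : ∀ i, Tendsto (fun k => Y k i) atTop (nhds (yb i)) := fun i => tendsto_pi_nhds.mp hY i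
  have hfeas : ∀ k, feasS D (t k) (X k) (Y k) := fun k => (hM k).1
  have hprod0 : ∀ i, xb i * yb i = 0 := by
    intro i
    have h1 : Tendsto (fun k => X k i * Y k i) atTop (nhds (xb i * yb i)) := (hXi i).mul (hYi i)
    have h2 : Tendsto (fun k => X k i * Y k i) atTop (nhds 0) := by
      refine tendsto_of_tendsto_of_tendsto_of_le_of_le (g := fun k => -t k) (h := t)
        ?_ ht0 (fun k => ((hfeas k).2.2.2.1 i).1) (fun k => ((hfeas k).2.2.2.1 i).2)
      simpa using ht0.neg
    exact tendsto_nhds_unique h1 h2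
  have hy0b : ∀ i, 0 ≤ yb i := fun i =>
    ge_of_tendsto (hYi i) (Filter.Eventually.of_forall fun k => ((hfeas k).2.2.2.2 i).1)
  -- pigeonhole: one biactive index violated frequently
  have hfreq : ∃ᶠ k in atTop, ∃ i ∈ a00 xb yb, i ∉ Hact (t k) (X k) (Y k) := by
    rw [Filter.frequently_atTop]
    intro a
    obtain ⟨k, hk, hns⟩ := hcon a
    obtain ⟨i, hi, hni⟩ := Finset.not_subset.mp hns
    exact ⟨k, hk, i, hi, hni⟩
  have hpig : ∃ i₀ ∈ a00 xb yb, ∃ᶠ k in atTop, i₀ ∉ Hact (t k) (X k) (Y k) := by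
    by_contra hno
    push_neg at hno
    have hall : ∀ᶠ k in atTop, ∀ i ∈ a00 xb yb, i ∈ Hact (t k) (X k) (Y k) := by
      rw [eventually_all_finset]
      intro i hi
      have h := hno i hi
      simpa using h
    obtain ⟨k, ⟨i, hi, hni⟩, h2⟩ := (hfreq.and_eventually hall).exists
    exact hni (h2 i hi)
  obtain ⟨i₀, hi₀, hfreq₀⟩ := hpig
  -- eventual inclusion facts
  have hevQ : ∀ᶠ k in atTop, Q0 D (X k) ⊆ Q0 D xb := by
    have hev : ∀ᶠ k in atTop, ∀ q : Q, D.g q xb ≠ 0 → D.g q (X k) ≠ 0 := by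
      rw [Filter.eventually_all]
      intro q
      by_cases hq : D.g q xb = 0
      · exact Filter.Eventually.of_forall fun k h => absurd hq h
      · have hg : Tendsto (fun k => D.g q (X k)) atTop (nhds (D.g q xb)) :=
          (((D.hg q).continuous).tendsto _).comp hX
        exact (hg.eventually_ne hq).mono fun k h _ => h
    refine hev.mono fun k h q hqk => ?_
    simp only [Q0, Finset.mem_filter, Finset.mem_univ, true_and] at hqk ⊢
    by_contra hq0
    exact h q hq0 hqk
  have hevE : ∀ᶠ k in atTop, Eact D (Y k) ⊆ Eact D yb := by
    have hev : ∀ᶠ k in atTop, ∀ i : Fin n, yb i ≠ 1 + D.ε → Y k i ≠ 1 + D.ε := by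
      rw [Filter.eventually_all]
      intro i
      by_cases hq : yb i = 1 + D.ε
      · exact Filter.Eventually.of_forall fun k h => absurd hq h
      · exact ((hYi i).eventually_ne hq).mono fun k h _ => h
    refine hev.mono fun k h i hik => ?_
    simp only [Eact, Finset.mem_filter, Finset.mem_univ, true_and] at hik ⊢
    by_contra hq0
    exact h i hq0 hik
  have hev3 : ∀ᶠ k in atTop, ((∑ i, yb i) ≠ (n : ℝ) - D.s → (M k).mu3 = 0) := by
    by_cases hsum : (∑ i, yb i) = (n : ℝ) - D.s
    · exact Filter.Eventually.of_forall fun k h => absurd hsum h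
    · have hS : Tendsto (fun k => ∑ i, Y k i) atTop (nhds (∑ i, yb i)) :=
        tendsto_finset_sum _ fun i _ => hYi i
      refine (hS.eventually_ne hsum).mono fun k h _ => ?_
      rcases mul_eq_zero.mp ((hM k).2.2.2.2.1) with h0 | h0
      · exact h0
      · exact absurd (sub_eq_zero.mp h0) h
  -- first extraction
  obtain ⟨φ, hφm, hφ⟩ := Filter.extraction_of_frequently_atTop
    (hfreq₀.and_eventually (hevQ.and (hevE.and hev3)))
  -- coefficient sequences
  obtain ⟨Lam, hLamdef⟩ : ∃ L : ℕ → P → ℝ, L = fun k => (M (φ k)).lam := ⟨_, rfl⟩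
  obtain ⟨MU1, hMU1def⟩ : ∃ L : ℕ → Q → ℝ,
      L = fun k => (fun q => if q ∈ Q0 D (X (φ k)) then (M (φ k)).mu1 q else 0) := ⟨_, rfl⟩
  obtain ⟨MU2, hMU2def⟩ : ∃ L : ℕ → Vec n,
      L = fun k => (fun i => if i ∈ Eact D (Y (φ k)) then (M (φ k)).mu2 i else 0) := ⟨_, rfl⟩
  obtain ⟨Mu3, hMu3def⟩ : ∃ L : ℕ → ℝ, L = fun k => (M (φ k)).mu3 := ⟨_, rfl⟩
  obtain ⟨S1, hS1def⟩ : ∃ L : ℕ → Vec n,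
      L = fun k => (fun i =>
        (if i ∈ Hge (t (φ k)) (X (φ k)) (Y (φ k)) then (M (φ k)).etaGe i * Y (φ k) i else 0)
        - (if i ∈ Hle (t (φ k)) (X (φ k)) (Y (φ k)) then (M (φ k)).etaLe i * Y (φ k) i else 0)) :=
    ⟨_, rfl⟩
  obtain ⟨S2, hS2def⟩ : ∃ L : ℕ → Vec n,
      L = fun k => (fun i =>
        ((if i ∈ Hge (t (φ k)) (X (φ k)) (Y (φ k)) then (M (φ k)).etaGe i * X (φ k) i else 0)
        - (if i ∈ Hle (t (φ k)) (X (φ k)) (Y (φ k)) then (M (φ k)).etaLe i * X (φ k) i else 0))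
        + (if i ∈ Nact (Y (φ k)) then (M (φ k)).nu i else 0)) := ⟨_, rfl⟩
  have hP1 : ∀ k, combo D xb yb (X (φ k)) (Lam k) (MU1 k) (MU2 k) (Mu3 k) (S1 k) (S2 k)
      = (grad D.f (X (φ k)), D.c) := by
    intro k
    simp only [hLamdef, hMU1def, hMU2def, hMu3def, hS1def, hS2def]
    exact reshape_KKT D ((hM (φ k)).2.2.2.2.2.2.2.2) xb yb (hφ k).2.1 (hφ k).2.2.1
  have hP2 : ∀ k i, S1 k i * X (φ k) i = S2 k i * Y (φ k) i := by
    intro k i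
    have ht' := htpos (φ k)
    simp only [hS1def, hS2def]
    by_cases hg : i ∈ Hge (t (φ k)) (X (φ k)) (Y (φ k))
    · have hxy : X (φ k) i * Y (φ k) i = -(t (φ k)) := by
        simpa [Hge] using hg
      have hl : i ∉ Hle (t (φ k)) (X (φ k)) (Y (φ k)) := by
        simp only [Hle, Finset.mem_filter, Finset.mem_univ, true_and, hxy]
        intro h; linarith
      have hn : i ∉ Nact (Y (φ k)) := by
        simp only [Nact, Finset.mem_filter, Finset.mem_univ, true_and]
        intro h
        rw [h, mul_zero] at hxy
        linarith
      simp only [if_pos hg, if_neg hl, if_neg hn]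
      ring
    · by_cases hl : i ∈ Hle (t (φ k)) (X (φ k)) (Y (φ k))
      · have hxy : X (φ k) i * Y (φ k) i = t (φ k) := by simpa [Hle] using hl
        have hn : i ∉ Nact (Y (φ k)) := by
          simp only [Nact, Finset.mem_filter, Finset.mem_univ, true_and]
          intro h; rw [h, mul_zero] at hxy; linarith
        simp only [if_pos hl, if_neg hg, if_neg hn]
        ring
      · simp only [if_neg hg, if_neg hl]
        by_cases hn : i ∈ Nact (Y (φ k))
        · have h0 : Y (φ k) i = 0 := by simpa [Nact] using hn
          simp [if_pos hn, h0]
        · simp [if_neg hn]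
  have hP3 : ∀ k, S1 k i₀ = 0 := by
    intro k
    have hni := (hφ k).1
    rw [Hact, Finset.mem_union] at hni
    push_neg at hni
    simp only [hS1def, if_neg hni.1, if_neg hni.2, sub_zero]
  have hMU10 : ∀ k q, q ∉ Q0 D xb → MU1 k q = 0 := by
    intro k q hq
    simp only [hMU1def]
    exact if_neg fun h => hq ((hφ k).2.1 h)
  have hMU20 : ∀ k i, i ∉ Eact D yb → MU2 k i = 0 := by
    intro k i hi
    simp only [hMU2def]
    exact if_neg fun h => hi ((hφ k).2.2.1 h)
  have hMu30 : (∑ i, yb i) ≠ (n : ℝ) - D.s → ∀ k, Mu3 k = 0 := by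
    intro hne k
    simp only [hMu3def]
    exact (hφ k).2.2.2 hne
  -- normalization and second extraction
  obtain ⟨A, hAdef⟩ : ∃ L : ℕ → (P → ℝ) × (Q → ℝ) × (Vec n) × ℝ × (Vec n) × (Vec n),
      L = fun k => (Lam k, MU1 k, MU2 k, Mu3 k, S1 k, S2 k) := ⟨_, rfl⟩
  obtain ⟨τ, hτdef⟩ : ∃ L : ℕ → ℝ, L = fun k => (1 + ‖A k‖)⁻¹ := ⟨_, rfl⟩
  have hτpos : ∀ k, 0 < τ k := by
    intro k; simp only [hτdef]; positivity
  have hτle : ∀ k, τ k ≤ 1 := by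
    intro k
    simp only [hτdef]
    rw [inv_le_one_iff₀]
    right; linarith [norm_nonneg (A k)]
  have hnormA : ∀ k, ‖τ k • A k‖ = 1 - τ k := by
    intro k
    have h1 : (0:ℝ) < 1 + ‖A k‖ := by positivity
    rw [norm_smul, Real.norm_eq_abs, abs_of_pos (hτpos k)]
    simp only [hτdef]
    field_simp
    ring
  have hbound : ∀ k, ((τ k • A k, τ k) :
      ((P → ℝ) × (Q → ℝ) × (Vec n) × ℝ × (Vec n) × (Vec n)) × ℝ) ∈
      Metric.closedBall (0 : ((P → ℝ) × (Q → ℝ) × (Vec n) × ℝ × (Vec n) × (Vec n)) × ℝ) 2 := by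
    intro k
    rw [mem_closedBall_zero_iff, Prod.norm_def]
    refine max_le ?_ ?_
    · rw [hnormA k]; linarith [hτpos k]
    · rw [Real.norm_eq_abs, abs_of_pos (hτpos k)]; linarith [hτle k]
  obtain ⟨wbar, -, ψ, hψm, hψt⟩ :=
    tendsto_subseq_of_bounded (Metric.isBounded_closedBall) hbound
  have hψt' : Tendsto (fun k => ((τ (ψ k) • A (ψ k), τ (ψ k)) :
      ((P → ℝ) × (Q → ℝ) × (Vec n) × ℝ × (Vec n) × (Vec n)) × ℝ)) atTop (nhds wbar) := hψt
  have hγt : Tendsto (fun k => τ (ψ k) • A (ψ k)) atTop (nhds wbar.1) := tendsto_fst_of hψt'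
  have hτψ : Tendsto (fun k => τ (ψ k)) atTop (nhds wbar.2) := tendsto_snd_of hψt'
  have hAcomp : ∀ k, τ k • A k =
      (τ k • Lam k, τ k • MU1 k, τ k • MU2 k, τ k * Mu3 k, τ k • S1 k, τ k • S2 k) := by
    intro k; rw [hAdef]; rfl
  have hγt' : Tendsto (fun k =>
      (τ (ψ k) • Lam (ψ k), τ (ψ k) • MU1 (ψ k), τ (ψ k) • MU2 (ψ k),
        τ (ψ k) * Mu3 (ψ k), τ (ψ k) • S1 (ψ k), τ (ψ k) • S2 (ψ k))) atTop (nhds wbar.1) :=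
    hγt.congr fun k => hAcomp (ψ k)
  have hc1 : Tendsto (fun k => τ (ψ k) • Lam (ψ k)) atTop (nhds wbar.1.1) :=
    tendsto_fst_of hγt'
  have hr2 := tendsto_snd_of hγt'
  have hc2 : Tendsto (fun k => τ (ψ k) • MU1 (ψ k)) atTop (nhds wbar.1.2.1) :=
    tendsto_fst_of hr2
  have hr3 := tendsto_snd_of hr2
  have hc3 : Tendsto (fun k => τ (ψ k) • MU2 (ψ k)) atTop (nhds wbar.1.2.2.1) :=
    tendsto_fst_of hr3
  have hr4 := tendsto_snd_of hr3
  have hc4 : Tendsto (fun k => τ (ψ k) * Mu3 (ψ k)) atTop (nhds wbar.1.2.2.2.1) :=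
    tendsto_fst_of hr4
  have hr5 := tendsto_snd_of hr4
  have hc5 : Tendsto (fun k => τ (ψ k) • S1 (ψ k)) atTop (nhds wbar.1.2.2.2.2.1) :=
    tendsto_fst_of hr5
  have hc6 : Tendsto (fun k => τ (ψ k) • S2 (ψ k)) atTop (nhds wbar.1.2.2.2.2.2) :=
    tendsto_snd_of hr5
  -- limits along the composed subsequence
  have hXφψ : Tendsto (fun k => X (φ (ψ k))) atTop (nhds xb) :=
    hX.comp ((hφm.comp hψm).tendsto_atTop)
  have hYφψ : Tendsto (fun k => Y (φ (ψ k))) atTop (nhds yb) :=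
    hY.comp ((hφm.comp hψm).tendsto_atTop)
  have hb : Tendsto (fun k => ((grad D.f (X (φ (ψ k))), D.c) : Vec n × Vec n)) atTop
      (nhds (grad D.f xb, D.c)) :=
    (((grad_cont D.hf).tendsto _).comp hXφψ).prodMk_nhds tendsto_const_nhds
  have hscaled : ∀ k, combo D xb yb (X (φ k)) (τ k • Lam k) (τ k • MU1 k) (τ k • MU2 k)
      (τ k * Mu3 k) (τ k • S1 k) (τ k • S2 k)
      = τ k • ((grad D.f (X (φ k)), D.c) : Vec n × Vec n) := by
    intro k
    rw [combo_smul, hP1 k]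
  have hD1 : combo D xb yb xb wbar.1.1 wbar.1.2.1 wbar.1.2.2.1 wbar.1.2.2.2.1
      wbar.1.2.2.2.2.1 wbar.1.2.2.2.2.2 = wbar.2 • ((grad D.f xb, D.c) : Vec n × Vec n) :=
    tendsto_nhds_unique (combo_tendsto D xb yb hXφψ hc1 hc2 hc3 hc4 hc5 hc6)
      ((hτψ.smul hb).congr fun k => (hscaled (ψ k)).symm)
  have hev5 : ∀ i, Tendsto (fun k => τ (ψ k) * S1 (ψ k) i) atTop
      (nhds (wbar.1.2.2.2.2.1 i)) := by
    intro i
    simpa [Pi.smul_apply, smul_eq_mul] using tendsto_pi_nhds.mp hc5 i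
  have hev6 : ∀ i, Tendsto (fun k => τ (ψ k) * S2 (ψ k) i) atTop
      (nhds (wbar.1.2.2.2.2.2 i)) := by
    intro i
    simpa [Pi.smul_apply, smul_eq_mul] using tendsto_pi_nhds.mp hc6 i
  have hD2 : ∀ i, wbar.1.2.2.2.2.1 i * xb i = wbar.1.2.2.2.2.2 i * yb i := by
    intro i
    refine tendsto_nhds_unique ((hev5 i).mul (tendsto_pi_nhds.mp hXφψ i)) ?_
    refine ((hev6 i).mul (tendsto_pi_nhds.mp hYφψ i)).congr fun k => ?_
    rw [mul_assoc, mul_assoc, hP2 (ψ k) i]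
  have hD3 : wbar.1.2.2.2.2.1 i₀ = 0 := by
    refine tendsto_nhds_unique (hev5 i₀) ?_
    refine Tendsto.congr (fun k => ?_) (tendsto_const_nhds (x := (0:ℝ)))
    rw [hP3 (ψ k), mul_zero]
  have hev2 : ∀ q, Tendsto (fun k => τ (ψ k) * MU1 (ψ k) q) atTop (nhds (wbar.1.2.1 q)) := by
    intro q
    simpa [Pi.smul_apply, smul_eq_mul] using tendsto_pi_nhds.mp hc2 q
  have hev3' : ∀ i, Tendsto (fun k => τ (ψ k) * MU2 (ψ k) i) atTop
      (nhds (wbar.1.2.2.1 i)) := by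
    intro i
    simpa [Pi.smul_apply, smul_eq_mul] using tendsto_pi_nhds.mp hc3 i
  have hD4 : ∀ q, q ∉ Q0 D xb → wbar.1.2.1 q = 0 := by
    intro q hq
    refine tendsto_nhds_unique (hev2 q) ?_
    refine Tendsto.congr (fun k => ?_) (tendsto_const_nhds (x := (0:ℝ)))
    rw [hMU10 (ψ k) q hq, mul_zero]
  have hD5 : ∀ i, i ∉ Eact D yb → wbar.1.2.2.1 i = 0 := by
    intro i hi
    refine tendsto_nhds_unique (hev3' i) ?_
    refine Tendsto.congr (fun k => ?_) (tendsto_const_nhds (x := (0:ℝ)))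
    rw [hMU20 (ψ k) i hi, mul_zero]
  have hD6 : (∑ i, yb i) ≠ (n : ℝ) - D.s → wbar.1.2.2.2.1 = 0 := by
    intro hne
    refine tendsto_nhds_unique hc4 ?_
    refine Tendsto.congr (fun k => ?_) (tendsto_const_nhds (x := (0:ℝ)))
    rw [hMu30 hne (ψ k), mul_zero]
  have hD7 : ‖wbar.1‖ = 1 - wbar.2 :=
    tendsto_nhds_unique ((continuous_norm.tendsto _).comp hγt)
      ((tendsto_const_nhds.sub hτψ).congr fun k => (hnormA (ψ k)).symm)
  have hsupp1 : ∀ i, i ∉ a01 xb yb ∪ a00 xb yb → wbar.1.2.2.2.2.1 i = 0 := by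
    intro i hi
    rw [Finset.mem_union] at hi
    push_neg at hi
    obtain ⟨h1, h2⟩ := hi
    simp only [a01, Finset.mem_filter, Finset.mem_univ, true_and, not_and] at h1
    simp only [a00, Finset.mem_filter, Finset.mem_univ, true_and, not_and] at h2
    have hx0 : xb i ≠ 0 := by
      intro h
      rcases (hy0b i).lt_or_eq with hlt | heq
      · exact h1 h hlt
      · exact h2 h heq.symm
    have hD2' := hD2 i
    have hyb : yb i = 0 := (mul_eq_zero.mp (hprod0 i)).resolve_left hx0
    rw [hyb, mul_zero] at hD2'
    exact (mul_eq_zero.mp hD2').resolve_right hx0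
  have hsupp2 : ∀ i, i ∉ a10 xb yb ∪ a00 xb yb → wbar.1.2.2.2.2.2 i = 0 := by
    intro i hi
    rw [Finset.mem_union] at hi
    push_neg at hi
    obtain ⟨h1, h2⟩ := hi
    simp only [a10, Finset.mem_filter, Finset.mem_univ, true_and, not_and] at h1
    simp only [a00, Finset.mem_filter, Finset.mem_univ, true_and, not_and] at h2
    have hy0 : yb i ≠ 0 := by
      intro h
      by_cases hx : xb i = 0
      · exact h2 hx h
      · exact h1 hx h
    have hx0 : xb i = 0 := (mul_eq_zero.mp (hprod0 i)).resolve_right hy0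
    have hD2' := hD2 i
    rw [hx0, mul_zero] at hD2'
    exact (mul_eq_zero.mp hD2'.symm).resolve_right hy0
  by_cases hτb : wbar.2 = 0
  · -- degenerate limit of multipliers: contradiction with MPOC-LICQ
    have heq0 : combo D xb yb xb wbar.1.1 wbar.1.2.1 wbar.1.2.2.1 wbar.1.2.2.2.1
        wbar.1.2.2.2.2.1 wbar.1.2.2.2.2.2 = 0 := by
      rw [hD1, hτb, zero_smul]
    obtain ⟨e1, e2, e3, e4, e5, e6⟩ :=
      licq_apply D hnd.2.1 _ _ _ _ _ _ hD6 hsupp1 hsupp2 heq0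
    have hγ0 : wbar.1 = 0 := by
      refine Prod.ext (funext e1) (Prod.ext ?_ (Prod.ext ?_
        (Prod.ext e4 (Prod.ext (funext e5) (funext e6)))))
      · funext q
        by_cases hq : q ∈ Q0 D xb
        · exact e2 q hq
        · exact hD4 q hq
      · funext i
        by_cases hi : i ∈ Eact D yb
        · exact e3 i hi
        · exact hD5 i hi
    rw [hγ0, norm_zero, hτb] at hD7
    norm_num at hD7
  · -- multipliers converge: uniqueness via MPOC-LICQ contradicts NDT3
    have hEq2 : combo D xb yb xb (wbar.2⁻¹ • wbar.1.1) (wbar.2⁻¹ • wbar.1.2.1)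
        (wbar.2⁻¹ • wbar.1.2.2.1) (wbar.2⁻¹ * wbar.1.2.2.2.1)
        (wbar.2⁻¹ • wbar.1.2.2.2.2.1) (wbar.2⁻¹ • wbar.1.2.2.2.2.2)
        = (grad D.f xb, D.c) := by
      rw [combo_smul, hD1, smul_smul, inv_mul_cancel₀ hτb, one_smul]
    have hEqMb := reshape_T D hnd.1.2.2.2.2.2.2
    have hEq0 : combo D xb yb xb
        (wbar.2⁻¹ • wbar.1.1 - Mb.lam) (wbar.2⁻¹ • wbar.1.2.1 - Mb.mu1)
        (wbar.2⁻¹ • wbar.1.2.2.1 - Mb.mu2) (wbar.2⁻¹ * wbar.1.2.2.2.1 - Mb.mu3)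
        (wbar.2⁻¹ • wbar.1.2.2.2.2.1 - (fun i =>
          (if i ∈ a01 xb yb then Mb.sig1 i else 0) + (if i ∈ a00 xb yb then Mb.rho1 i else 0)))
        (wbar.2⁻¹ • wbar.1.2.2.2.2.2 - (fun i =>
          (if i ∈ a10 xb yb then Mb.sig2 i else 0) + (if i ∈ a00 xb yb then Mb.rho2 i else 0)))
        = 0 := by
      rw [combo_sub, hEq2, hEqMb, sub_self]
    have hmu3Δ : (∑ i, yb i) ≠ (n : ℝ) - D.s →
        wbar.2⁻¹ * wbar.1.2.2.2.1 - Mb.mu3 = 0 := by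
      intro hne
      have hMb3 : Mb.mu3 = 0 := by
        rcases mul_eq_zero.mp hnd.1.2.2.2.2.1 with h | h
        · exact h
        · exact absurd (sub_eq_zero.mp h) hne
      rw [hD6 hne, hMb3, mul_zero, sub_zero]
    have hs1Δ : ∀ i, i ∉ a01 xb yb ∪ a00 xb yb →
        (wbar.2⁻¹ • wbar.1.2.2.2.2.1 - (fun i =>
          (if i ∈ a01 xb yb then Mb.sig1 i else 0) +
          (if i ∈ a00 xb yb then Mb.rho1 i else 0))) i = 0 := by
      intro i hi
      have hm := hi
      rw [Finset.mem_union] at hm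
      push_neg at hm
      simp only [Pi.sub_apply, Pi.smul_apply, smul_eq_mul, hsupp1 i hi, mul_zero,
        if_neg hm.1, if_neg hm.2, add_zero, sub_zero]
    have hs2Δ : ∀ i, i ∉ a10 xb yb ∪ a00 xb yb →
        (wbar.2⁻¹ • wbar.1.2.2.2.2.2 - (fun i =>
          (if i ∈ a10 xb yb then Mb.sig2 i else 0) +
          (if i ∈ a00 xb yb then Mb.rho2 i else 0))) i = 0 := by
      intro i hi
      have hm := hi
      rw [Finset.mem_union] at hm
      push_neg at hm
      simp only [Pi.sub_apply, Pi.smul_apply, smul_eq_mul, hsupp2 i hi, mul_zero,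
        if_neg hm.1, if_neg hm.2, add_zero, sub_zero]
    obtain ⟨-, -, -, -, e5, -⟩ :=
      licq_apply D hnd.2.1 _ _ _ _ _ _ hmu3Δ hs1Δ hs2Δ hEq0
    have hi01 : i₀ ∉ a01 xb yb := by
      have hy00 : yb i₀ = 0 := by
        have := hi₀
        simp only [a00, Finset.mem_filter, Finset.mem_univ, true_and] at this
        exact this.2
      simp only [a01, Finset.mem_filter, Finset.mem_univ, true_and, not_and]
      intro _ h
      rw [hy00] at h
      exact lt_irrefl _ h
    have hrho : Mb.rho1 i₀ = 0 := by
      have hfin := e5 i₀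
      simp only [Pi.sub_apply, Pi.smul_apply, smul_eq_mul, hD3, mul_zero,
        if_neg hi01, if_pos hi₀, zero_add, zero_sub, neg_eq_zero] at hfin
      exact hfin
    exact absurd hrho (hnd.2.2.2.2.2.1 i₀ hi₀).1

end Scholtes
end
end

section
/- Let (x̄,ȳ) be a T-stationary point of the regularized continuous reformulation R with multipliers (λ̄,μ̄,σ̄,ϱ̄). Then the multipliers on the index set a10 do not vanish: σ̄_{2,i} ≠ 0 for all i ∈ a10(x̄,ȳ). -/
open scoped Classical
open Finset Filter Topology

noncomputable section
namespace Scholtes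

variable {n : ℕ} {P Q : Type*} [Fintype P] [Fintype Q]

/-- the σ̄₂-multipliers of any T-stationary point of R do not
vanish on a10(x̄,ȳ). -/
theorem statement17 {n : ℕ} {P Q : Type*} [Fintype P] [Fintype Q]
    (D : Setting n P Q) (x y : Vec n) (M : TMult n P Q)
    (hT : TStatAt D x y M) :
    ∀ i ∈ a10 x y, M.sig2 i ≠ 0 := by
  intro i hi hzero
  obtain ⟨hfeas, hmu1, hmu2, hmu3nn, hcompl, hrho, hEq⟩ := hT
  obtain ⟨hhp, hgq, hsum, hxy, hbox⟩ := hfeas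
  have hεpos := D.hεpos
  have hεle := D.hεle
  simp only [a10, mem_filter, mem_univ, true_and] at hi
  -- componentwise second-coordinate equation
  have key : ∀ j : Fin n, D.c j =
      -(if j ∈ Eact D y then M.mu2 j else 0) + M.mu3
      + (if j ∈ a10 x y then M.sig2 j else 0)
      + (if j ∈ a00 x y then M.rho2 j else 0) := by
    intro j
    have h2 := congrArg (fun v : Vec n × Vec n => v.2 j) hEq
    simp only [ex, ey, eAll, Prod.snd_add, Prod.snd_sub, Prod.snd_sum, Prod.smul_snd,
      Prod.fst_add, Pi.add_apply, Pi.sub_apply, Finset.sum_apply, Pi.smul_apply,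
      smul_eq_mul, Pi.zero_apply, mul_zero, Finset.sum_const_zero, zero_add, add_zero,
      mul_one, Pi.single_apply, mul_ite] at h2
    rw [Finset.sum_ite_eq, Finset.sum_ite_eq, Finset.sum_ite_eq] at h2
    linarith [h2]
  -- facts about index i
  have hiE : i ∉ Eact D y := by
    simp only [Eact, mem_filter, mem_univ, true_and, hi.2]
    intro h; linarith
  have hia10 : i ∈ a10 x y := by
    simp only [a10, mem_filter, mem_univ, true_and]; exact hi
  have hia00 : i ∉ a00 x y := by
    simp only [a00, mem_filter, mem_univ, true_and]
    exact fun h => hi.1 h.1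
  have hci : D.c i = M.mu3 := by
    have := key i
    simp [hiE, hia10, hia00, hzero] at this
    linarith
  have hmu3pos : 0 < M.mu3 := hci ▸ D.hcpos i
  have hsum_eq : (∑ j, y j) = (n : ℝ) - D.s := by
    by_contra h
    have := hcompl
    have h2 : (∑ j, y j) - ((n : ℝ) - D.s) ≠ 0 := fun hc => h (by linarith [sub_eq_zero.mp hc])
    exact h2 (by
      have := mul_eq_zero.mp hcompl
      rcases this with h3 | h3
      · exact absurd h3 (ne_of_gt hmu3pos)
      · exact h3)
  -- y vanishes outside a01
  have hy0 : ∀ j, j ∉ a01 x y → y j = 0 := by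
    intro j hj
    simp only [a01, mem_filter, mem_univ, true_and, not_and, not_lt] at hj
    by_cases hx : x j = 0
    · exact le_antisymm (hj hx) (hbox j).1
    · have := hxy j
      rcases mul_eq_zero.mp this with h | h
      · exact absurd h hx
      · exact h
  have hsum01 : (∑ j ∈ a01 x y, y j) = (n : ℝ) - D.s := by
    rw [← hsum_eq]
    exact Finset.sum_subset (Finset.subset_univ _) (fun j _ hj => hy0 j hj)
  -- there is j ∈ a01 with y j ≠ 1 + ε
  have hex : ∃ j ∈ a01 x y, y j ≠ 1 + D.ε := by
    by_contra h
    push_neg at h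
    have hcard : ((a01 x y).card : ℝ) * (1 + D.ε) = (n : ℝ) - D.s := by
      rw [← hsum01, Finset.sum_congr rfl h, Finset.sum_const, nsmul_eq_mul]
    set k : ℝ := ((a01 x y).card : ℝ) with hk
    set m : ℝ := (n : ℝ) - D.s with hm
    have hm1 : 1 ≤ m := by
      have : (D.s : ℝ) + 1 ≤ (n : ℝ) := by exact_mod_cast D.hs
      simp only [hm]; linarith
    have hklt : k < m := by nlinarith [hcard]
    have hkle : k ≤ m - 1 := by
      have : (a01 x y).card + 1 ≤ n - D.s := by
        have : ((a01 x y).card : ℝ) < ((n - D.s : ℕ) : ℝ) := by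
          push_cast [Nat.cast_sub D.hs.le]
          exact hklt
        exact_mod_cast this
      have h2 : ((a01 x y).card : ℝ) + 1 ≤ ((n - D.s : ℕ) : ℝ) := by exact_mod_cast this
      rw [Nat.cast_sub D.hs.le] at h2
      simp only [hk, hm]; linarith
    have hεm : D.ε ≤ 1 / m := hεle
    have hknn : 0 ≤ k := Nat.cast_nonneg _
    have hmpos : 0 < m := by linarith
    have : k * (1 + D.ε) ≤ (m - 1) * (1 + 1 / m) := by
      apply mul_le_mul hkle (by linarith) (by linarith) (by linarith)
    rw [hcard] at this
    have hlt : (m - 1) * (1 + 1 / m) < m := by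
      have h1 : (m - 1) * (1 + 1 / m) = m - 1 / m := by
        field_simp; ring
      rw [h1]
      have : 0 < 1 / m := by positivity
      linarith
    linarith
  obtain ⟨j, hj, hjE⟩ := hex
  simp only [a01, mem_filter, mem_univ, true_and] at hj
  have hjEact : j ∉ Eact D y := by
    simp only [Eact, mem_filter, mem_univ, true_and]; exact hjE
  have hja10 : j ∉ a10 x y := by
    simp only [a10, mem_filter, mem_univ, true_and]
    exact fun h => h.1 hj.1
  have hja00 : j ∉ a00 x y := by
    simp only [a00, mem_filter, mem_univ, true_and]
    exact fun h => absurd h.2 (ne_of_gt hj.2)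
  have hcj : D.c j = M.mu3 := by
    have := key j
    simp [hjEact, hja10, hja00] at this
    linarith
  have hij : j = i := D.hcinj (hcj.trans hci.symm)
  exact hi.1 (hij ▸ hj.1)

end Scholtes
end
end
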